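/- For every k ≥ 2, the k × k grid graph Grid(k) has pathwidth exactly k. -/

import Mathlib

/-- A tree decomposition of a simple graph `G` on vertex type `V`, with bags indexed by the
nodes of a finite tree `T` on `Fin n`: every vertex is in some bag, every edge has both
endpoints in some bag, and for each vertex the set of nodes whose bag contains it induces a
connected (hence subtree) subgraph of `T`. -/
def IsTreeDecomp {V : Type} (G : SimpleGraph V) {n : ℕ}
    (T : SimpleGraph (Fin n)) (bag : Fin n → Finset V) : Prop :=
  T.IsTree ∧
  (∀ v : V, ∃ i, v ∈ bag i) ∧
  (∀ u v : V, G.Adj u v → ∃ i, u ∈ bag i ∧ v ∈ bag i) ∧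
  (∀ v : V, (T.induce {i | v ∈ bag i}).Connected)

/-- The treewidth of `G`: the least `w` such that `G` admits a tree decomposition all of whose
bags have at most `w + 1` vertices (i.e. of width at most `w`). -/
noncomputable def treewidth {V : Type} (G : SimpleGraph V) : ℕ :=
  sInf {w : ℕ | ∃ (n : ℕ) (T : SimpleGraph (Fin n)) (bag : Fin n → Finset V),
    IsTreeDecomp G T bag ∧ ∀ i, (bag i).card ≤ w + 1}

/-- The pathwidth of `G`: the least `w` such that `G` admits a tree decomposition along a path
all of whose bags have at most `w + 1` vertices (i.e. a path decomposition of width at most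
`w`). -/
noncomputable def pathwidth {V : Type} (G : SimpleGraph V) : ℕ :=
  sInf {w : ℕ | ∃ (n : ℕ) (bag : Fin n → Finset V),
    IsTreeDecomp G (SimpleGraph.pathGraph n) bag ∧ ∀ i, (bag i).card ≤ w + 1}

/-- The `k × k` grid graph: vertices are pairs in `Fin k × Fin k`, two vertices being adjacent
if and only if they agree in one coordinate and differ by exactly `1` in the other. -/
def gridGraph (k : ℕ) : SimpleGraph (Fin k × Fin k) :=
  SimpleGraph.fromRel (fun a b =>
    (a.1 = b.1 ∧ (a.2 : ℕ) + 1 = (b.2 : ℕ)) ∨ ((a.1 : ℕ) + 1 = (b.1 : ℕ) ∧ a.2 = b.2))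

section Aux
open SimpleGraph Finset

/-! ### Generic lemmas about path decompositions -/

-- a walk in the induced subgraph of a path graph passes through every index in between
lemma mem_of_walk_between {n : ℕ} {S : Set (Fin n)} {t : Fin n} :
    ∀ {a b : ↥S} (_ : ((pathGraph n).induce S).Walk a b),
      (a : Fin n).val ≤ t.val → t.val ≤ (b : Fin n).val → t ∈ S := by
  intro a b p
  induction p with
  | @nil a =>
    intro h1 h2
    have : (a : Fin n) = t := Fin.ext (le_antisymm h1 h2)
    exact this ▸ a.2
  | @cons u c w h p ih =>
    intro h1 h2
    rcases eq_or_lt_of_le h1 with heq | hlt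
    · have : (u : Fin n) = t := Fin.ext heq
      exact this ▸ u.2
    · have hadj : (pathGraph n).Adj u.1 c.1 := by simpa using h
      rw [pathGraph_adj] at hadj
      have : (c : Fin n).val ≤ t.val := by omega
      exact ih this h2

-- bags containing a fixed vertex form an interval
lemma bag_interval {V : Type} {n : ℕ} {bag : Fin n → Finset V}
    (hconn : ∀ v : V, ((pathGraph n).induce {i | v ∈ bag i}).Connected)
    {v : V} {t1 t2 t : Fin n} (h1 : v ∈ bag t1) (h2 : v ∈ bag t2)
    (ht1 : t1 ≤ t) (ht2 : t ≤ t2) : v ∈ bag t := by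
  obtain ⟨p⟩ := (hconn v).preconnected ⟨t1, h1⟩ ⟨t2, h2⟩
  exact mem_of_walk_between p ht1 ht2

-- an interval of indices induces a connected subgraph of the path graph
lemma induce_connected_of_interval {n : ℕ} {S : Set (Fin n)}
    (hint : ∀ t1 t2 t : Fin n, t1 ∈ S → t2 ∈ S → t1 ≤ t → t ≤ t2 → t ∈ S)
    (hne : S.Nonempty) : ((pathGraph n).induce S).Connected := by
  have key : ∀ (d : ℕ) (a b : ↥S), (b : Fin n).val - (a : Fin n).val = d →
      (a : Fin n) ≤ (b : Fin n) → ((pathGraph n).induce S).Reachable a b := by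
    intro d
    induction d with
    | zero =>
      intro a b hd hle
      have : (a : Fin n) = (b : Fin n) := Fin.ext (by omega)
      have : a = b := Subtype.ext this
      exact this ▸ Reachable.refl a
    | succ d ih =>
      intro a b hd hle
      have hlt : (a : Fin n).val < (b : Fin n).val := by omega
      have hlt' : (a : Fin n).val + 1 < n := by omega
      set a' : Fin n := ⟨(a : Fin n).val + 1, hlt'⟩ with ha'
      have ha'S : a' ∈ S := hint a.1 b.1 a' a.2 b.2 (by simp [ha', Fin.le_def]) (by simp [ha', Fin.le_def]; omega)
      have hadj : ((pathGraph n).induce S).Adj a ⟨a', ha'S⟩ := by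
        simp only [comap_adj, Function.Embedding.coe_subtype]
        rw [pathGraph_adj]; left; rfl
      exact hadj.reachable.trans (ih ⟨a', ha'S⟩ b (by simp [ha']; omega) (by rw [Fin.le_def]; simp [ha']; omega))
  haveI : Nonempty ↥S := ⟨⟨hne.choose, hne.choose_spec⟩⟩
  refine ⟨fun a b => ?_⟩
  rcases le_total (a : Fin n) (b : Fin n) with h | h
  · exact key _ a b rfl h
  · exact (key _ b a rfl h).symm

-- if S is linked by a walk, the set of bags meeting S is an interval
lemma meet_interval {V : Type} {G : SimpleGraph V} {n : ℕ} {bag : Fin n → Finset V}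
    (hconn : ∀ v : V, ((pathGraph n).induce {i | v ∈ bag i}).Connected)
    (hedge : ∀ u v : V, G.Adj u v → ∃ i, u ∈ bag i ∧ v ∈ bag i) :
    ∀ {u v : V} (w : G.Walk u v) (t1 t2 t : Fin n), u ∈ bag t1 → v ∈ bag t2 →
      t1 ≤ t → t ≤ t2 → ∃ x ∈ w.support, x ∈ bag t := by
  intro u v w
  induction w with
  | @nil u =>
    intro t1 t2 t h1 h2 ht1 ht2
    exact ⟨u, by simp, bag_interval hconn h1 h2 ht1 ht2⟩
  | @cons u c v h p ih =>
    intro t1 t2 t h1 h2 ht1 ht2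
    obtain ⟨s, hus, hcs⟩ := hedge u c h
    by_cases hts : t ≤ s
    · exact ⟨u, by simp, bag_interval hconn h1 hus ht1 hts⟩
    · have : s ≤ t := le_of_not_ge hts
      obtain ⟨x, hx, hxb⟩ := ih s t2 t hcs h2 this ht2
      exact ⟨x, by simp [hx], hxb⟩


lemma pathGraph_isAcyclic (n : ℕ) : (pathGraph n).IsAcyclic := by
  rw [isAcyclic_iff_forall_adj_isBridge]
  have key : ∀ a b : Fin n, a.val + 1 = b.val →
      ¬ ((pathGraph n) \ fromEdgeSet {s(a, b)}).Reachable a b := by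
    intro a b hab hr
    obtain ⟨p⟩ := hr
    set G' := (pathGraph n) \ fromEdgeSet {s(a, b)} with hG'
    have step : ∀ x y : Fin n, G'.Adj x y → x.val ≤ a.val → y.val ≤ a.val := by
      intro x y hxy hx
      have h1 : (pathGraph n).Adj x y := hxy.1
      have h2 : ¬ (s(x,y) = s(a,b) ∧ x ≠ y) := by
        have := hxy.2
        simpa [fromEdgeSet_adj] using this
      rw [pathGraph_adj] at h1
      rcases h1 with h1 | h1
      · by_contra hy
        have hxa : x = a := Fin.ext (by omega)
        have hyb : y = b := Fin.ext (by omega)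
        exact h2 ⟨by rw [hxa, hyb], fun hxeq => by rw [hxeq] at h1; omega⟩
      · omega
    have final : ∀ (x y : Fin n) (_ : G'.Walk x y), x.val ≤ a.val → y.val ≤ a.val := by
      intro x y q
      induction q with
      | nil => exact id
      | @cons x c y hadj q ih => intro hx; exact ih (step x c hadj hx)
    have := final a b p le_rfl
    omega
  intro v w h
  rw [isBridge_iff]
  refine ?_
  rw [pathGraph_adj] at h
  rcases h with h | h
  · exact key v w h
  · intro hr
    have hr' := hr.symm
    rw [show s(v,w) = s(w,v) from Sym2.eq_swap] at hr'
    exact key w v h hr'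

lemma pathGraph_isTree (n : ℕ) (hn : 0 < n) : (pathGraph n).IsTree := by
  constructor
  · haveI : Nonempty (Fin n) := ⟨⟨0, hn⟩⟩
    exact ⟨pathGraph_preconnected n⟩
  · exact pathGraph_isAcyclic n

lemma gridGraph_adj {k : ℕ} {a b : Fin k × Fin k} :
    (gridGraph k).Adj a b ↔
      (a.1 = b.1 ∧ ((a.2:ℕ) + 1 = b.2 ∨ (b.2:ℕ) + 1 = a.2)) ∨
      (a.2 = b.2 ∧ ((a.1:ℕ) + 1 = b.1 ∨ (b.1:ℕ) + 1 = a.1)) := by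
  rw [gridGraph, SimpleGraph.fromRel_adj]
  constructor
  · rintro ⟨hne, h⟩
    rcases h with (⟨h1, h2⟩ | ⟨h1, h2⟩) | (⟨h1, h2⟩ | ⟨h1, h2⟩)
    · exact Or.inl ⟨h1, Or.inl h2⟩
    · exact Or.inr ⟨h2, Or.inl h1⟩
    · exact Or.inl ⟨h1.symm, Or.inr h2⟩
    · exact Or.inr ⟨h2.symm, Or.inr h1⟩
  · rintro (⟨h1, h2 | h2⟩ | ⟨h1, h2 | h2⟩)
    · exact ⟨fun hc => by rw [hc] at h2; omega, Or.inl (Or.inl ⟨h1, h2⟩)⟩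
    · exact ⟨fun hc => by rw [hc] at h2; omega, Or.inr (Or.inl ⟨h1.symm, h2⟩)⟩
    · exact ⟨fun hc => by rw [hc] at h2; omega, Or.inl (Or.inr ⟨h2, h1⟩)⟩
    · exact ⟨fun hc => by rw [hc] at h2; omega, Or.inr (Or.inr ⟨h2, h1.symm⟩)⟩

lemma grid_adj_right {k : ℕ} {i a b : Fin k} (h : (a:ℕ) + 1 = b) :
    (gridGraph k).Adj (i, a) (i, b) := gridGraph_adj.mpr (Or.inl ⟨rfl, Or.inl h⟩)

lemma grid_adj_down {k : ℕ} {i a b : Fin k} (h : (a:ℕ) + 1 = b) :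
    (gridGraph k).Adj (a, i) (b, i) := gridGraph_adj.mpr (Or.inr ⟨rfl, Or.inl h⟩)

/-- index of a grid vertex in the row-major order -/
def gidx {k : ℕ} (v : Fin k × Fin k) : ℕ := k * v.1.val + v.2.val

lemma gidx_lt {k : ℕ} (v : Fin k × Fin k) : gidx v < k * k := by
  have h1 := v.1.isLt
  have h2 := v.2.isLt
  calc k * v.1.val + v.2.val < k * v.1.val + k := by omega
    _ = k * (v.1.val + 1) := by ring
    _ ≤ k * k := Nat.mul_le_mul_left k (by omega)

lemma gidx_inj {k : ℕ} {v w : Fin k × Fin k} (h : gidx v = gidx w) : v = w := by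
  have h2 := v.2.isLt; have h2' := w.2.isLt
  unfold gidx at h
  have hv1 : v.1.val = w.1.val := by
    have := Nat.mul_add_div (show 0 < k by omega) v.1.val v.2.val
    have := Nat.mul_add_div (show 0 < k by omega) w.1.val w.2.val
    have hv : v.2.val / k = 0 := Nat.div_eq_of_lt h2
    have hw : w.2.val / k = 0 := Nat.div_eq_of_lt h2'
    have : (k * v.1.val + v.2.val) / k = (k * w.1.val + w.2.val) / k := by rw [h]
    rwa [Nat.mul_add_div (by omega), Nat.mul_add_div (by omega), hv, hw] at this
  rw [hv1] at h
  have hv2 : v.2.val = w.2.val := by omega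
  exact Prod.ext (Fin.ext hv1) (Fin.ext hv2)

/-- the bags of the standard path decomposition of the grid -/
def gbag (k : ℕ) (t : Fin (k * k)) : Finset (Fin k × Fin k) :=
  univ.filter (fun v => t.val ≤ gidx v ∧ gidx v ≤ t.val + k)

lemma upper_bound (k : ℕ) (hk : 2 ≤ k) :
    IsTreeDecomp (gridGraph k) (SimpleGraph.pathGraph (k*k)) (gbag k) ∧
      ∀ i, ((gbag k) i).card ≤ k + 1 := by
  have hkk : 0 < k * k := by positivity
  refine ⟨⟨pathGraph_isTree _ hkk, ?_, ?_, ?_⟩, ?_⟩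
  · intro v
    exact ⟨⟨gidx v, gidx_lt v⟩, by simp [gbag]⟩
  · intro u v huv
    rw [gridGraph_adj] at huv
    have hdiff : gidx u + 1 = gidx v ∨ gidx v + 1 = gidx u ∨
        gidx u + k = gidx v ∨ gidx v + k = gidx u := by
      rcases huv with ⟨h1, h2 | h2⟩ | ⟨h1, h2 | h2⟩
      · left; simp only [gidx, h1]; omega
      · right; left; simp only [gidx, h1]; omega
      · right; right; left
        simp only [gidx, h1]
        have : k * v.1.val = k * u.1.val + k := by rw [← h2]; ring
        omega
      · right; right; right
        simp only [gidx, h1]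
        have : k * u.1.val = k * v.1.val + k := by rw [← h2]; ring
        omega
    have hu := gidx_lt u; have hv := gidx_lt v
    refine ⟨⟨min (gidx u) (gidx v), by omega⟩, ?_, ?_⟩ <;>
      · simp only [gbag, mem_filter, mem_univ, true_and]
        constructor <;> omega
  · intro v
    apply induce_connected_of_interval
    · intro t1 t2 t h1 h2 ht1 ht2
      simp only [gbag, Set.mem_setOf_eq, mem_filter] at *
      rw [Fin.le_def] at ht1 ht2
      refine ⟨mem_univ v, by omega, by omega⟩
    · exact ⟨⟨gidx v, gidx_lt v⟩, by simp [gbag]⟩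
  · intro t
    have : (gbag k t).card ≤ (Finset.Icc t.val (t.val + k)).card := by
      apply Finset.card_le_card_of_injOn gidx
      · intro v hv
        simp only [gbag, mem_filter, Finset.mem_coe] at hv
        simp [Finset.mem_Icc]; omega
      · intro v _ w _ h; exact gidx_inj h
    rw [Nat.card_Icc] at this; omega

-- walks along rows and columns of the grid
lemma rowWalk {k : ℕ} (i : Fin k) : ∀ (d : ℕ) (a b : Fin k), a.val ≤ b.val → b.val - a.val = d →
    ∃ w : (gridGraph k).Walk (i, a) (i, b),
      ∀ x ∈ w.support, x.1 = i ∧ a.val ≤ x.2.val ∧ x.2.val ≤ b.val := by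
  intro d
  induction d with
  | zero =>
    intro a b hab hd
    have : a = b := Fin.ext (by omega)
    subst this
    exact ⟨SimpleGraph.Walk.nil, by simp⟩
  | succ d ih =>
    intro a b hab hd
    have hlt : a.val + 1 < k := by have := b.isLt; omega
    set a' : Fin k := ⟨a.val + 1, hlt⟩ with ha'
    obtain ⟨w, hw⟩ := ih a' b (by simp [ha']; omega) (by simp [ha']; omega)
    refine ⟨SimpleGraph.Walk.cons (grid_adj_right (by simp [ha'])) w, ?_⟩
    intro x hx
    rw [SimpleGraph.Walk.support_cons, List.mem_cons] at hx
    rcases hx with hx | hx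
    · subst hx; exact ⟨rfl, le_rfl, hab⟩
    · obtain ⟨h1, h2, h3⟩ := hw x hx
      exact ⟨h1, by simp [ha'] at h2; omega, h3⟩

lemma colWalk {k : ℕ} (i : Fin k) : ∀ (d : ℕ) (a b : Fin k), a.val ≤ b.val → b.val - a.val = d →
    ∃ w : (gridGraph k).Walk (a, i) (b, i),
      ∀ x ∈ w.support, x.2 = i ∧ a.val ≤ x.1.val ∧ x.1.val ≤ b.val := by
  intro d
  induction d with
  | zero =>
    intro a b hab hd
    have : a = b := Fin.ext (by omega)
    subst this
    exact ⟨SimpleGraph.Walk.nil, by simp⟩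
  | succ d ih =>
    intro a b hab hd
    have hlt : a.val + 1 < k := by have := b.isLt; omega
    set a' : Fin k := ⟨a.val + 1, hlt⟩ with ha'
    obtain ⟨w, hw⟩ := ih a' b (by simp [ha']; omega) (by simp [ha']; omega)
    refine ⟨SimpleGraph.Walk.cons (grid_adj_down (by simp [ha'])) w, ?_⟩
    intro x hx
    rw [SimpleGraph.Walk.support_cons, List.mem_cons] at hx
    rcases hx with hx | hx
    · subst hx; exact ⟨rfl, le_rfl, hab⟩
    · obtain ⟨h1, h2, h3⟩ := hw x hx
      exact ⟨h1, by simp [ha'] at h2; omega, h3⟩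

lemma rowWalk' {k : ℕ} (i : Fin k) (a b : Fin k) :
    ∃ w : (gridGraph k).Walk (i, a) (i, b),
      ∀ x ∈ w.support, x.1 = i ∧ (x.2.val ≤ a.val ∨ x.2.val ≤ b.val) := by
  rcases le_total a.val b.val with h | h
  · obtain ⟨w, hw⟩ := rowWalk i _ a b h rfl
    exact ⟨w, fun x hx => ⟨(hw x hx).1, Or.inr (hw x hx).2.2⟩⟩
  · obtain ⟨w, hw⟩ := rowWalk i _ b a h rfl
    refine ⟨w.reverse, fun x hx => ?_⟩
    rw [SimpleGraph.Walk.support_reverse, List.mem_reverse] at hx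
    exact ⟨(hw x hx).1, Or.inl (hw x hx).2.2⟩

lemma colWalk' {k : ℕ} (i : Fin k) (a b : Fin k) :
    ∃ w : (gridGraph k).Walk (a, i) (b, i),
      ∀ x ∈ w.support, x.2 = i ∧ (x.1.val ≤ a.val ∨ x.1.val ≤ b.val) := by
  rcases le_total a.val b.val with h | h
  · obtain ⟨w, hw⟩ := colWalk i _ a b h rfl
    exact ⟨w, fun x hx => ⟨(hw x hx).1, Or.inr (hw x hx).2.2⟩⟩
  · obtain ⟨w, hw⟩ := colWalk i _ b a h rfl
    refine ⟨w.reverse, fun x hx => ?_⟩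
    rw [SimpleGraph.Walk.support_reverse, List.mem_reverse] at hx
    exact ⟨(hw x hx).1, Or.inl (hw x hx).2.2⟩

section Bramble
variable {k : ℕ}

/-- embedding of `Fin (k-1)` into `Fin k` -/
def emb {k : ℕ} (j : Fin (k-1)) : Fin k := Fin.castLE (Nat.sub_le k 1) j

@[simp] lemma emb_val {j : Fin (k-1)} : (emb j : Fin k).val = j.val := rfl

/-- the cross bramble sets -/
def crossSet (k : ℕ) (i j : Fin (k-1)) : Finset (Fin k × Fin k) :=
  Finset.univ.filter (fun p => (p.1 = emb i ∧ p.2.val < k-1) ∨ (p.2 = emb j ∧ p.1.val < k-1))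

def gbotSet (k : ℕ) : Finset (Fin k × Fin k) := Finset.univ.filter (fun p => p.1.val = k-1)

def rightSet (k : ℕ) : Finset (Fin k × Fin k) :=
  Finset.univ.filter (fun p => p.2.val = k-1 ∧ p.1.val < k-1)

lemma mem_crossSet {i j : Fin (k-1)} {p : Fin k × Fin k} :
    p ∈ crossSet k i j ↔ (p.1 = emb i ∧ p.2.val < k-1) ∨ (p.2 = emb j ∧ p.1.val < k-1) := by
  simp [crossSet]

lemma mem_botSet {p : Fin k × Fin k} : p ∈ gbotSet k ↔ p.1.val = k-1 := by simp [gbotSet]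

lemma mem_rightSet {p : Fin k × Fin k} :
    p ∈ rightSet k ↔ p.2.val = k-1 ∧ p.1.val < k-1 := by simp [rightSet]

/-- index type for the bramble -/
abbrev BIdx (k : ℕ) := (Fin (k-1) × Fin (k-1)) ⊕ Bool

def Brset (k : ℕ) : BIdx k → Finset (Fin k × Fin k)
  | Sum.inl (i, j) => crossSet k i j
  | Sum.inr false => gbotSet k
  | Sum.inr true => rightSet k

variable (hk : 2 ≤ k)
include hk

lemma brset_nonempty (s : BIdx k) : ∃ x, x ∈ Brset k s := by
  have h1 : k - 1 < k := by omega
  match s with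
  | Sum.inl (i, j) =>
    exact ⟨(emb i, emb j), mem_crossSet.mpr (Or.inl ⟨rfl, by simpa using j.isLt⟩)⟩
  | Sum.inr false => exact ⟨(⟨k-1, h1⟩, ⟨k-1, h1⟩), mem_botSet.mpr rfl⟩
  | Sum.inr true =>
    exact ⟨(⟨0, by omega⟩, ⟨k-1, h1⟩), mem_rightSet.mpr ⟨rfl, by simp; omega⟩⟩

-- every bramble set is linked by walks staying inside it
lemma brset_linked (s : BIdx k) (u v : Fin k × Fin k)
    (hu : u ∈ Brset k s) (hv : v ∈ Brset k s) :
    ∃ w : (gridGraph k).Walk u v, ∀ x ∈ w.support, x ∈ Brset k s := by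
  match s with
  | Sum.inl (i, j) =>
    -- walk to the center (emb i, emb j)
    have hij : (emb i : Fin k).val < k - 1 ∧ (emb j : Fin k).val < k - 1 := by
      simp only [emb_val]; exact ⟨i.isLt, j.isLt⟩
    have hc : ∀ p : Fin k × Fin k, p ∈ crossSet k i j →
        ∃ w : (gridGraph k).Walk p ((emb i : Fin k), (emb j : Fin k)),
          ∀ x ∈ w.support, x ∈ crossSet k i j := by
      rintro ⟨p1, p2⟩ hp
      rcases mem_crossSet.mp hp with ⟨h1, h2⟩ | ⟨h1, h2⟩
      · simp only at h1 h2
        subst h1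
        obtain ⟨w, hw⟩ := rowWalk' (emb i : Fin k) p2 (emb j)
        refine ⟨w, fun x hx => ?_⟩
        obtain ⟨hx1, hx2⟩ := hw x hx
        exact mem_crossSet.mpr (Or.inl ⟨hx1, by rcases hx2 with h | h <;> omega⟩)
      · simp only at h1 h2
        subst h1
        obtain ⟨w, hw⟩ := colWalk' (emb j : Fin k) p1 (emb i)
        refine ⟨w, fun x hx => ?_⟩
        obtain ⟨hx1, hx2⟩ := hw x hx
        exact mem_crossSet.mpr (Or.inr ⟨hx1, by rcases hx2 with h | h <;> omega⟩)
    simp only [Brset] at hu hv ⊢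
    obtain ⟨wu, hwu⟩ := hc u hu
    obtain ⟨wv, hwv⟩ := hc v hv
    refine ⟨wu.append wv.reverse, fun x hx => ?_⟩
    rw [SimpleGraph.Walk.mem_support_append_iff] at hx
    rcases hx with hx | hx
    · exact hwu x hx
    · rw [SimpleGraph.Walk.support_reverse, List.mem_reverse] at hx
      exact hwv x hx
  | Sum.inr false =>
    simp only [Brset] at hu hv ⊢
    obtain ⟨u1, u2⟩ := u
    obtain ⟨v1, v2⟩ := v
    rw [mem_botSet] at hu hv
    simp only at hu hv
    have h1 : u1 = v1 := Fin.ext (by omega)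
    subst h1
    obtain ⟨w, hw⟩ := rowWalk' u1 u2 v2
    exact ⟨w, fun x hx => mem_botSet.mpr (by rw [(hw x hx).1]; exact hu)⟩
  | Sum.inr true =>
    simp only [Brset] at hu hv ⊢
    obtain ⟨u1, u2⟩ := u
    obtain ⟨v1, v2⟩ := v
    rw [mem_rightSet] at hu hv
    simp only at hu hv
    have h1 : u2 = v2 := Fin.ext (by omega)
    subst h1
    obtain ⟨w, hw⟩ := colWalk' u2 u1 v1
    refine ⟨w, fun x hx => mem_rightSet.mpr ?_⟩
    obtain ⟨hx1, hx2⟩ := hw x hx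
    constructor
    · rw [hx1]; exact hu.1
    · rcases hx2 with h | h <;> omega
end Bramble

section Touch
variable {k : ℕ} (hk : 2 ≤ k)
include hk

lemma brset_touch (s s' : BIdx k) :
    ∃ u v, u ∈ Brset k s ∧ v ∈ Brset k s' ∧ (u = v ∨ (gridGraph k).Adj u v) := by
  have hlast : k - 1 < k := by omega
  have hpen : k - 2 < k := by omega
  set last : Fin k := ⟨k-1, hlast⟩ with hl
  set pen : Fin k := ⟨k-2, hpen⟩ with hp
  have hpl : (pen : Fin k).val + 1 = (last : Fin k).val := by simp [hl, hp]; omega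
  have hpen1 : (pen : Fin k).val < k - 1 := by simp [hp]; omega
  match s, s' with
  | Sum.inl (i, j), Sum.inl (i', j') =>
    refine ⟨(emb i, emb j'), (emb i, emb j'), ?_, ?_, Or.inl rfl⟩
    · exact mem_crossSet.mpr (Or.inl ⟨rfl, by simpa using j'.isLt⟩)
    · exact mem_crossSet.mpr (Or.inr ⟨rfl, by simpa using i.isLt⟩)
  | Sum.inl (i, j), Sum.inr false =>
    refine ⟨(pen, emb j), (last, emb j), ?_, ?_, Or.inr (grid_adj_down hpl)⟩
    · exact mem_crossSet.mpr (Or.inr ⟨rfl, hpen1⟩)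
    · exact mem_botSet.mpr (by simp [hl])
  | Sum.inl (i, j), Sum.inr true =>
    refine ⟨(emb i, pen), (emb i, last), ?_, ?_, Or.inr (grid_adj_right hpl)⟩
    · exact mem_crossSet.mpr (Or.inl ⟨rfl, hpen1⟩)
    · exact mem_rightSet.mpr ⟨by simp [hl], by simpa using i.isLt⟩
  | Sum.inr false, Sum.inl (i, j) =>
    refine ⟨(last, emb j), (pen, emb j), ?_, ?_, Or.inr (grid_adj_down hpl).symm⟩
    · exact mem_botSet.mpr (by simp [hl])
    · exact mem_crossSet.mpr (Or.inr ⟨rfl, hpen1⟩)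
  | Sum.inr true, Sum.inl (i, j) =>
    refine ⟨(emb i, last), (emb i, pen), ?_, ?_, Or.inr (grid_adj_right hpl).symm⟩
    · exact mem_rightSet.mpr ⟨by simp [hl], by simpa using i.isLt⟩
    · exact mem_crossSet.mpr (Or.inl ⟨rfl, hpen1⟩)
  | Sum.inr false, Sum.inr false =>
    exact ⟨(last, last), (last, last), mem_botSet.mpr (by simp [hl]),
      mem_botSet.mpr (by simp [hl]), Or.inl rfl⟩
  | Sum.inr true, Sum.inr true =>
    exact ⟨(pen, last), (pen, last), mem_rightSet.mpr ⟨by simp [hl], hpen1⟩,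
      mem_rightSet.mpr ⟨by simp [hl], hpen1⟩, Or.inl rfl⟩
  | Sum.inr false, Sum.inr true =>
    exact ⟨(last, last), (pen, last), mem_botSet.mpr (by simp [hl]),
      mem_rightSet.mpr ⟨by simp [hl], hpen1⟩, Or.inr (grid_adj_down hpl).symm⟩
  | Sum.inr true, Sum.inr false =>
    exact ⟨(pen, last), (last, last), mem_rightSet.mpr ⟨by simp [hl], hpen1⟩,
      mem_botSet.mpr (by simp [hl]), Or.inr (grid_adj_down hpl)⟩
end Touch

/-- main lower bound: every path decomposition of the grid has a bag of size at least k+1 -/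
lemma grid_lower {k n : ℕ} (hk : 2 ≤ k) (bag : Fin n → Finset (Fin k × Fin k))
    (hdec : IsTreeDecomp (gridGraph k) (SimpleGraph.pathGraph n) bag) :
    ∃ t, k + 1 ≤ (bag t).card := by
  obtain ⟨-, hvert, hedge, hconn⟩ := hdec
  classical
  set I : BIdx k → Finset (Fin n) :=
    fun s => univ.filter (fun t => ∃ x ∈ Brset k s, x ∈ bag t) with hI
  have hmemI : ∀ s t, t ∈ I s ↔ ∃ x ∈ Brset k s, x ∈ bag t := by
    intro s t; simp [hI]
  have hne : ∀ s, (I s).Nonempty := by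
    intro s
    obtain ⟨x, hx⟩ := brset_nonempty hk s
    obtain ⟨i, hi⟩ := hvert x
    exact ⟨i, (hmemI s i).mpr ⟨x, hx, hi⟩⟩
  have hint : ∀ (s : BIdx k) (t1 t2 t : Fin n), t1 ∈ I s → t2 ∈ I s → t1 ≤ t → t ≤ t2 →
      t ∈ I s := by
    intro s t1 t2 t h1 h2 ht1 ht2
    obtain ⟨u, hu, hub⟩ := (hmemI s t1).mp h1
    obtain ⟨v, hv, hvb⟩ := (hmemI s t2).mp h2
    obtain ⟨w, hw⟩ := brset_linked (hk := hk) s u v hu hv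
    obtain ⟨x, hx, hxb⟩ := meet_interval hconn hedge w t1 t2 t hub hvb ht1 ht2
    exact (hmemI s t).mpr ⟨x, hw x hx, hxb⟩
  have htouch : ∀ s s', ∃ t, t ∈ I s ∧ t ∈ I s' := by
    intro s s'
    obtain ⟨u, v, hu, hv, huv⟩ := brset_touch hk s s'
    rcases huv with rfl | hadj
    · obtain ⟨i, hi⟩ := hvert u
      exact ⟨i, (hmemI s i).mpr ⟨u, hu, hi⟩, (hmemI s' i).mpr ⟨u, hv, hi⟩⟩
    · obtain ⟨i, hiu, hiv⟩ := hedge u v hadj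
      exact ⟨i, (hmemI s i).mpr ⟨u, hu, hiu⟩, (hmemI s' i).mpr ⟨v, hv, hiv⟩⟩
  obtain ⟨s0, -, hs0⟩ := Finset.exists_max_image (univ : Finset (BIdx k))
    (fun s => (I s).min' (hne s)) ⟨Sum.inr true, mem_univ _⟩
  set tstar : Fin n := (I s0).min' (hne s0) with hts
  have hits : ∀ s, ∃ x ∈ Brset k s, x ∈ bag tstar := by
    intro s
    obtain ⟨t', ht's, ht's0⟩ := htouch s s0
    refine (hmemI s tstar).mp (hint s ((I s).min' (hne s)) t' tstar
      (Finset.min'_mem _ _) ht's (hs0 s (mem_univ _)) (Finset.min'_le _ _ ht's0))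
  -- now count: the bag tstar has at least k+1 elements
  set H := bag tstar with hH
  have hgex : ∃ g : Fin (k-1) → (Fin k × Fin k), Function.Injective g ∧
      ∀ j, g j ∈ H ∧ (g j).1.val < k-1 ∧ (g j).2.val < k-1 := by
    by_cases hA : ∀ j : Fin (k-1), ∃ x, x ∈ H ∧ x.2 = (emb j : Fin k) ∧ x.1.val < k-1
    · choose g hg1 hg2 hg3 using hA
      refine ⟨g, ?_, fun j => ⟨hg1 j, hg3 j, by rw [hg2 j]; exact j.isLt⟩⟩
      intro a b hab
      have ha := hg2 a; have hb := hg2 b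
      rw [hab, hb] at ha
      exact Fin.ext (by have : (emb b : Fin k).val = (emb a : Fin k).val := by rw [ha]
                        simpa using this.symm)
    · push_neg at hA
      obtain ⟨j0, hj0⟩ := hA
      have hrow : ∀ i : Fin (k-1), ∃ x, x ∈ H ∧ x.1 = (emb i : Fin k) ∧ x.2.val < k-1 := by
        intro i
        obtain ⟨x, hx, hxH⟩ := hits (Sum.inl (i, j0))
        have hx' : x ∈ crossSet k i j0 := by simpa [Brset] using hx
        rcases mem_crossSet.mp hx' with ⟨h1, h2⟩ | ⟨h1, h2⟩
        · exact ⟨x, hxH, h1, h2⟩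
        · exact absurd h2 (by have := hj0 x hxH h1; omega)
      choose g hg1 hg2 hg3 using hrow
      refine ⟨g, ?_, fun j => ⟨hg1 j, by rw [hg2 j]; exact j.isLt, hg3 j⟩⟩
      intro a b hab
      have ha := hg2 a; have hb := hg2 b
      rw [hab, hb] at ha
      exact Fin.ext (by have : (emb b : Fin k).val = (emb a : Fin k).val := by rw [ha]
                        simpa using this.symm)
  obtain ⟨g, ginj, gprop⟩ := hgex
  obtain ⟨b, hbB, hbH⟩ := hits (Sum.inr false)
  obtain ⟨r, hrB, hrH⟩ := hits (Sum.inr true)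
  have hb1 : b.1.val = k - 1 := by simpa [Brset, mem_botSet] using hbB
  have hr2 : r.2.val = k - 1 ∧ r.1.val < k - 1 := by simpa [Brset, mem_rightSet] using hrB
  set A : Finset (Fin k × Fin k) := Finset.image g univ with hA
  have hAcard : A.card = k - 1 := by
    rw [hA, Finset.card_image_of_injective _ ginj, card_univ, Fintype.card_fin]
  have hrA : r ∉ A := by
    rw [hA]
    simp only [Finset.mem_image, mem_univ, true_and, not_exists]
    intro j hj
    have := (gprop j).2.2
    rw [hj] at this; omega
  have hbA : b ∉ insert r A := by
    rw [Finset.mem_insert]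
    rintro (rfl | hbA')
    · omega
    · rw [hA] at hbA'
      simp only [Finset.mem_image, mem_univ, true_and] at hbA'
      obtain ⟨j, hj⟩ := hbA'
      have := (gprop j).2.1
      rw [hj] at this; omega
  have hsub : insert b (insert r A) ⊆ H := by
    intro x hx
    rw [Finset.mem_insert, Finset.mem_insert] at hx
    rcases hx with rfl | rfl | hx
    · exact hbH
    · exact hrH
    · rw [hA] at hx
      simp only [Finset.mem_image, mem_univ, true_and] at hx
      obtain ⟨j, hj⟩ := hx
      exact hj ▸ (gprop j).1
  have hcard : (insert b (insert r A)).card = k + 1 := by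
    rw [Finset.card_insert_of_notMem hbA, Finset.card_insert_of_notMem hrA, hAcard]
    omega
  exact ⟨tstar, by rw [← hcard]; exact Finset.card_le_card hsub⟩

end Aux

/-- For every `k ≥ 2`, the `k × k` grid graph has pathwidth exactly `k`. -/
theorem pathwidth_gridGraph (k : ℕ) (hk : 2 ≤ k) : pathwidth (gridGraph k) = k := by
  have hmem : k ∈ {w : ℕ | ∃ (n : ℕ) (bag : Fin n → Finset (Fin k × Fin k)),
      IsTreeDecomp (gridGraph k) (SimpleGraph.pathGraph n) bag ∧ ∀ i, (bag i).card ≤ w + 1} := by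
    obtain ⟨h1, h2⟩ := upper_bound k hk
    exact ⟨k * k, gbag k, h1, h2⟩
  rw [pathwidth]
  apply le_antisymm
  · exact Nat.sInf_le hmem
  · apply le_csInf ⟨k, hmem⟩
    rintro w ⟨n, bag, hdec, hcard⟩
    obtain ⟨t, ht⟩ := grid_lower hk bag hdec
    have := hcard t
    omega
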